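/- Let 𝓕 be a finite, involutively head autoreduced subset of a polynomial algebra of solvable type over a field. Then every polynomial g has a unique involutive normal form with respect to 𝓕: any two polynomials g₁, g₂ that are obtained from g by involutive reductions modulo 𝓕 and contain no term involutively reducible by 𝓕 are equal. Moreover, g lies in the involutive span of 𝓕 if and only if its involutive normal form is 0. -/

import Mathlib

/-- Polynomials in `n` variables over `R`, represented by their coefficient families
indexed by multi indices. -/
abbrev SPoly (R : Type) [CommRing R] (n : ℕ) := (Fin n → ℕ) →₀ R

/-- The leading exponent of a polynomial with respect to a term order (the maximal
element of its support; `0` for the zero polynomial). -/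
noncomputable def lexp {R : Type} [CommRing R] {n : ℕ} (ord : LinearOrder (Fin n → ℕ))
    (f : SPoly R n) : Fin n → ℕ :=
  WithBot.unbotD 0 (@Finset.max _ ord f.support)

/-- A polynomial algebra of solvable type `(P, ⋆, ≺)`: the `R`-module `R[x₁,…,xₙ]`
equipped with an associative unital multiplication `⋆` such that `r ⋆ f = r • f` for
scalars, and with respect to a term order `≺` (a monoid order) the leading exponent of
`x^μ ⋆ x^ν` is `μ + ν` and of `x^μ ⋆ r` (for `r ≠ 0`) is `μ`. -/
structure SolvMul (R : Type) [CommRing R] (n : ℕ) (ord : LinearOrder (Fin n → ℕ)) where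
  star : SPoly R n → SPoly R n → SPoly R n
  zero_min : ∀ μ : Fin n → ℕ, ord.le 0 μ
  add_compat : ∀ μ ν σ : Fin n → ℕ, ord.lt μ ν → ord.lt (μ + σ) (ν + σ)
  star_assoc : ∀ f g h : SPoly R n, star (star f g) h = star f (star g h)
  star_add : ∀ f g h : SPoly R n, star f (g + h) = star f g + star f h
  add_star : ∀ f g h : SPoly R n, star (f + g) h = star f h + star g h
  one_star : ∀ f : SPoly R n, star (Finsupp.single 0 1) f = f
  star_one : ∀ f : SPoly R n, star f (Finsupp.single 0 1) = f
  scalar_star : ∀ (r : R) (f : SPoly R n), star (Finsupp.single 0 r) f = r • f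
  mono_mono : ∀ μ ν : Fin n → ℕ,
    star (Finsupp.single μ 1) (Finsupp.single ν 1) ≠ 0 ∧
      lexp ord (star (Finsupp.single μ 1) (Finsupp.single ν 1)) = μ + ν
  mono_scalar : ∀ (μ : Fin n → ℕ) (r : R), r ≠ 0 →
    star (Finsupp.single μ 1) (Finsupp.single 0 r) ≠ 0 ∧
      lexp ord (star (Finsupp.single μ 1) (Finsupp.single 0 r)) = μ


/-- The restricted cone of `ν` determined by a set `N` of multiplicative indices. -/
def rcone {n : ℕ} (N : Set (Fin n)) (ν : Fin n → ℕ) : Set (Fin n → ℕ) :=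
  {μ | (∀ i, ν i ≤ μ i) ∧ ∀ i ∉ N, μ i = ν i}

/-- An involutive division on `ℕ^n`. -/
structure InvDiv (n : ℕ) where
  mult : Finset (Fin n → ℕ) → (Fin n → ℕ) → Set (Fin n)
  nested : ∀ (𝒩 : Finset (Fin n → ℕ)), ∀ μ ∈ 𝒩, ∀ ν ∈ 𝒩,
    (rcone (mult 𝒩 μ) μ ∩ rcone (mult 𝒩 ν) ν).Nonempty →
      rcone (mult 𝒩 μ) μ ⊆ rcone (mult 𝒩 ν) ν ∨
        rcone (mult 𝒩 ν) ν ⊆ rcone (mult 𝒩 μ) μ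
  mono : ∀ (𝒩 𝒩' : Finset (Fin n → ℕ)), 𝒩' ⊆ 𝒩 → ∀ ν ∈ 𝒩', mult 𝒩 ν ⊆ mult 𝒩' ν

/-- The set of leading exponents of a finite set of polynomials. -/
noncomputable def leadSet {R : Type} [CommRing R] {n : ℕ} (ord : LinearOrder (Fin n → ℕ))
    (ℋ : Finset (SPoly R n)) : Finset (Fin n → ℕ) :=
  ℋ.image (lexp ord)

/-- The monoid ideal of leading exponents of (the nonzero elements of) a set of
polynomials. -/
def leadExps {R : Type} [CommRing R] {n : ℕ} (ord : LinearOrder (Fin n → ℕ))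
    (I : Set (SPoly R n)) : Set (Fin n → ℕ) :=
  {μ | ∃ f ∈ I, f ≠ 0 ∧ lexp ord f = μ}

/-- `P` gives an involutive standard representation of `f` with respect to `ℋ`:
`f = Σ_{h∈ℋ} P_h ⋆ h`, every `P_h` only involves the multiplicative variables of `h`,
and `le(P_h ⋆ h) ⪯ le(f)`. -/
def IsInvRep {R : Type} [CommRing R] {n : ℕ} (ord : LinearOrder (Fin n → ℕ))
    (A : SolvMul R n ord) (L : InvDiv n) (ℋ : Finset (SPoly R n)) (f : SPoly R n)
    (P : {h // h ∈ ℋ} → SPoly R n) : Prop :=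
  f = ∑ h ∈ ℋ.attach, A.star (P h) h.1 ∧
    ∀ h : {h // h ∈ ℋ},
      (∀ μ ∈ (P h).support, ∀ i ∉ L.mult (leadSet ord ℋ) (lexp ord h.1), μ i = 0) ∧
      ord.le (lexp ord (A.star (P h) h.1)) (lexp ord f)

/-- `ℋ` is a weak involutive basis of the left ideal `I`: `ℋ ⊂ I \ {0}` and the
leading exponents of `ℋ` form a weak involutive basis of the monoid ideal of leading
exponents of `I`. -/
def WeakInvBasis {R : Type} [CommRing R] {n : ℕ} (ord : LinearOrder (Fin n → ℕ))
    (L : InvDiv n) (I : Set (SPoly R n)) (ℋ : Finset (SPoly R n)) : Prop :=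
  (↑ℋ : Set (SPoly R n)) ⊆ I ∧ (0 : SPoly R n) ∉ ℋ ∧
    (⋃ μ ∈ leadSet ord ℋ, rcone (L.mult (leadSet ord ℋ) μ) μ) = leadExps ord I

/-- `ℋ` is a strong involutive basis of `I`: a weak one whose involutive cones are
pairwise disjoint and whose elements have pairwise distinct leading exponents. -/
def StrongInvBasis {R : Type} [CommRing R] {n : ℕ} (ord : LinearOrder (Fin n → ℕ))
    (L : InvDiv n) (I : Set (SPoly R n)) (ℋ : Finset (SPoly R n)) : Prop :=
  WeakInvBasis ord L I ℋ ∧ Set.InjOn (lexp ord) (↑ℋ : Set (SPoly R n)) ∧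
    ∀ μ ∈ leadSet ord ℋ, ∀ ν ∈ leadSet ord ℋ, μ ≠ ν →
      Disjoint (rcone (L.mult (leadSet ord ℋ) μ) μ) (rcone (L.mult (leadSet ord ℋ) ν) ν)

/-- One step of involutive reduction of `g` modulo `𝓕`: a term `x^μ` of `g` with
`le(f)` an involutive divisor of `μ` for some `f ∈ 𝓕` is eliminated by subtracting
the appropriate multiple of `x^{μ - le(f)} ⋆ f`. -/
def RedStep {K : Type} [Field K] {n : ℕ} (ord : LinearOrder (Fin n → ℕ))
    (A : SolvMul K n ord) (L : InvDiv n) (𝓕 : Finset (SPoly K n))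
    (g g' : SPoly K n) : Prop :=
  ∃ f ∈ 𝓕, ∃ μ ∈ g.support,
    μ ∈ rcone (L.mult (leadSet ord 𝓕) (lexp ord f)) (lexp ord f) ∧
    g' = g - (g μ / ((A.star (Finsupp.single (μ - lexp ord f) 1) f) μ)) •
          A.star (Finsupp.single (μ - lexp ord f) 1) f

/-- `g₁` is an involutive normal form of `g` modulo `𝓕`: it is obtained from `g` by a
finite chain of involutive reductions and no term of `g₁` is involutively reducible
modulo `𝓕`. -/
def IsInvNF {K : Type} [Field K] {n : ℕ} (ord : LinearOrder (Fin n → ℕ))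
    (A : SolvMul K n ord) (L : InvDiv n) (𝓕 : Finset (SPoly K n))
    (g g₁ : SPoly K n) : Prop :=
  Relation.ReflTransGen (RedStep ord A L 𝓕) g g₁ ∧
    ∀ μ ∈ g₁.support, ∀ f ∈ 𝓕,
      μ ∉ rcone (L.mult (leadSet ord 𝓕) (lexp ord f)) (lexp ord f)

/-- The involutive span of `𝓕`: all sums `Σ_{f∈𝓕} P_f ⋆ f` with each `P_f` involving
only the multiplicative variables of `f`. -/
def PolyInvSpan {K : Type} [Field K] {n : ℕ} (ord : LinearOrder (Fin n → ℕ))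
    (A : SolvMul K n ord) (L : InvDiv n) (𝓕 : Finset (SPoly K n)) :
    Set (SPoly K n) :=
  {g | ∃ P : {h // h ∈ 𝓕} → SPoly K n,
        (∀ h : {h // h ∈ 𝓕},
          ∀ μ ∈ (P h).support, ∀ i ∉ L.mult (leadSet ord 𝓕) (lexp ord h.1), μ i = 0) ∧
        g = ∑ h ∈ 𝓕.attach, A.star (P h) h.1}

section Lemmas
variable {K : Type} [Field K] {n : ℕ} (ord : LinearOrder (Fin n → ℕ))

/-- Support is bounded strictly above by `M`. -/
def SBnd (M : Fin n → ℕ) (f : SPoly K n) : Prop := ∀ μ ∈ f.support, ord.lt μ M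

/-- `M` is the top exponent of `f`. -/
def TopAt (M : Fin n → ℕ) (f : SPoly K n) : Prop :=
  f M ≠ 0 ∧ ∀ μ ∈ f.support, ord.le μ M

lemma ordlt_of_le_ne {a b : Fin n → ℕ} (h : ord.le a b) (hne : a ≠ b) : ord.lt a b :=
  @lt_of_le_of_ne _ ord.toPartialOrder _ _ h hne

lemma ordlt_of_le_lt {a b c : Fin n → ℕ} (h : ord.le a b) (h' : ord.lt b c) : ord.lt a c :=
  @lt_of_le_of_lt _ ord.toPreorder _ _ _ h h'

lemma ordle_of_lt {a b : Fin n → ℕ} (h : ord.lt a b) : ord.le a b :=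
  @le_of_lt _ ord.toPreorder _ _ h

lemma lexp_mem {f : SPoly K n} (hf : f ≠ 0) : lexp ord f ∈ f.support := by
  have hs : f.support.Nonempty := Finsupp.support_nonempty_iff.mpr hf
  have h1 : (@Finset.max _ ord f.support) = ((@Finset.max' _ ord f.support hs : Fin n → ℕ) : WithBot (Fin n → ℕ)) :=
    (@Finset.coe_max' _ ord _ hs).symm
  have : lexp ord f = @Finset.max' _ ord f.support hs := by
    unfold lexp; rw [h1]; rfl
  rw [this]; exact @Finset.max'_mem _ ord _ hs

lemma le_lexp {f : SPoly K n} {μ : Fin n → ℕ} (hμ : μ ∈ f.support) : ord.le μ (lexp ord f) := by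
  have hf : f ≠ 0 := by
    intro h; subst h; simp at hμ
  have hs : f.support.Nonempty := Finsupp.support_nonempty_iff.mpr hf
  have h1 : (@Finset.max _ ord f.support) = ((@Finset.max' _ ord f.support hs : Fin n → ℕ) : WithBot (Fin n → ℕ)) :=
    (@Finset.coe_max' _ ord _ hs).symm
  have h2 : lexp ord f = @Finset.max' _ ord f.support hs := by
    unfold lexp; rw [h1]; rfl
  rw [h2]; exact @Finset.le_max' _ ord _ μ hμ

lemma topAt_lexp {f : SPoly K n} (hf : f ≠ 0) : TopAt ord (lexp ord f) f :=
  ⟨Finsupp.mem_support_iff.mp (lexp_mem ord hf), fun _ hμ => le_lexp ord hμ⟩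

lemma TopAt.ne_zero {M : Fin n → ℕ} {f : SPoly K n} (h : TopAt ord M f) : f ≠ 0 := by
  intro h0; subst h0; exact h.1 rfl

lemma TopAt.lexp_eq {M : Fin n → ℕ} {f : SPoly K n} (h : TopAt ord M f) : lexp ord f = M := by
  have hf := h.ne_zero ord
  have h1 : ord.le (lexp ord f) M := h.2 _ (lexp_mem ord hf)
  have h2 : ord.le M (lexp ord f) := le_lexp ord (Finsupp.mem_support_iff.mpr h.1)
  exact @le_antisymm _ ord.toPartialOrder _ _ h1 h2

lemma TopAt.sbnd {M M' : Fin n → ℕ} {f : SPoly K n} (h : TopAt ord M f) (hlt : ord.lt M M') :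
    SBnd ord M' f := fun μ hμ => ordlt_of_le_lt ord (h.2 μ hμ) hlt

lemma sbnd_zero {M : Fin n → ℕ} : SBnd ord M (0 : SPoly K n) := by
  intro μ hμ; simp at hμ

lemma TopAt.smul {M : Fin n → ℕ} {f : SPoly K n} (h : TopAt ord M f) {c : K} (hc : c ≠ 0) :
    TopAt ord M (c • f) := by
  constructor
  · simp only [Finsupp.smul_apply, smul_eq_mul]
    exact mul_ne_zero hc h.1
  · intro μ hμ
    exact h.2 μ (Finsupp.support_smul hμ)

/-- Sum of a family with one strictly dominant top. -/
lemma topAt_sum {ι : Type*} [DecidableEq ι] {s : Finset ι} {F : ι → SPoly K n} {i₀ : ι}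
    (hi₀ : i₀ ∈ s) {M : Fin n → ℕ} (htop : TopAt ord M (F i₀))
    (hrest : ∀ i ∈ s, i ≠ i₀ → SBnd ord M (F i)) :
    TopAt ord M (∑ i ∈ s, F i) := by
  constructor
  · rw [Finset.sum_apply']
    rw [Finset.sum_eq_single_of_mem i₀ hi₀]
    · exact htop.1
    · intro i hi hne
      by_contra hne0
      have hmem : M ∈ (F i).support := Finsupp.mem_support_iff.mpr hne0
      exact (@lt_irrefl _ ord.toPreorder M) (hrest i hi hne M hmem)
  · intro μ hμ
    have := Finsupp.support_finset_sum hμ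
    rw [Finset.mem_biUnion] at this
    obtain ⟨i, hi, hμi⟩ := this
    by_cases hii : i = i₀
    · subst hii; exact htop.2 μ hμi
    · exact ordle_of_lt ord (hrest i hi hii μ hμi)

end Lemmas
section Lemmas2
variable {K : Type} [Field K] {n : ℕ} {ord : LinearOrder (Fin n → ℕ)} (A : SolvMul K n ord)

lemma star_zero_left (f : SPoly K n) : A.star 0 f = 0 := by
  have h := A.add_star 0 0 f
  rw [add_zero] at h
  exact (add_eq_left.mp h.symm)

lemma star_zero_right (f : SPoly K n) : A.star f 0 = 0 := by
  have h := A.star_add f 0 0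
  rw [add_zero] at h
  exact (add_eq_left.mp h.symm)

lemma star_neg_left (f g : SPoly K n) : A.star (-f) g = -(A.star f g) := by
  have h := A.add_star f (-f) g
  rw [add_neg_cancel, star_zero_left] at h
  exact eq_neg_of_add_eq_zero_right h.symm

lemma star_sum_right {ι : Type*} (s : Finset ι) (f : SPoly K n) (g : ι → SPoly K n) :
    A.star f (∑ i ∈ s, g i) = ∑ i ∈ s, A.star f (g i) := by
  classical
  induction s using Finset.induction with
  | empty => simp [star_zero_right]
  | insert _ _ hx ih =>
      rw [Finset.sum_insert hx, Finset.sum_insert hx, A.star_add, ih]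

lemma sum_star_left {ι : Type*} (s : Finset ι) (f : ι → SPoly K n) (g : SPoly K n) :
    A.star (∑ i ∈ s, f i) g = ∑ i ∈ s, A.star (f i) g := by
  classical
  induction s using Finset.induction with
  | empty => simp [star_zero_left]
  | insert _ _ hx ih =>
      rw [Finset.sum_insert hx, Finset.sum_insert hx, A.add_star, ih]

lemma single_eq_star (ν : Fin n → ℕ) (c : K) :
    Finsupp.single ν c = A.star (Finsupp.single 0 c) (Finsupp.single ν 1) := by
  rw [A.scalar_star, Finsupp.smul_single, smul_eq_mul, mul_one]

lemma star_smul_left (c : K) (f g : SPoly K n) :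
    A.star (c • f) g = c • A.star f g := by
  rw [← A.scalar_star c f, A.star_assoc, A.scalar_star]

lemma star_single_left (τ : Fin n → ℕ) (c : K) (g : SPoly K n) :
    A.star (Finsupp.single τ c) g = c • A.star (Finsupp.single τ 1) g := by
  rw [single_eq_star A τ c, A.star_assoc, ← A.scalar_star, ← A.star_assoc,
    ← single_eq_star A τ c]

end Lemmas2
section Lemmas3
variable {K : Type} [Field K] {n : ℕ} {ord : LinearOrder (Fin n → ℕ)} (A : SolvMul K n ord)

lemma eq_sum_single (f : SPoly K n) :
    f = ∑ ν ∈ f.support, Finsupp.single ν (f ν) := by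
  conv_lhs => rw [← Finsupp.sum_single f]
  rfl

lemma topAt_mono_mono (μ ν : Fin n → ℕ) :
    TopAt ord (μ + ν) (A.star (Finsupp.single μ 1) (Finsupp.single ν 1)) := by
  obtain ⟨hne, hle⟩ := A.mono_mono μ ν
  have := topAt_lexp ord hne
  rwa [hle] at this

lemma topAt_mono_scalar (μ : Fin n → ℕ) {r : K} (hr : r ≠ 0) :
    TopAt ord μ (A.star (Finsupp.single μ 1) (Finsupp.single 0 r)) := by
  obtain ⟨hne, hle⟩ := A.mono_scalar μ r hr
  have := topAt_lexp ord hne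
  rwa [hle] at this

/-- `p ⋆ x^ν` has top `lexp p + ν` when `TopAt σ p`. -/
lemma topAt_star_mono {p : SPoly K n} {σ : Fin n → ℕ} (hp : TopAt ord σ p) (ν : Fin n → ℕ) :
    TopAt ord (σ + ν) (A.star p (Finsupp.single ν 1)) := by
  classical
  rw [eq_sum_single p, sum_star_left]
  apply topAt_sum ord (i₀ := σ) (Finsupp.mem_support_iff.mpr hp.1)
  · rw [star_single_left]
    exact (topAt_mono_mono A σ ν).smul ord hp.1
  · intro τ hτ hne
    rw [star_single_left]
    have hlt : ord.lt τ σ := ordlt_of_le_ne ord (hp.2 τ hτ) hne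
    have hlt2 : ord.lt (τ + ν) (σ + ν) := A.add_compat τ σ ν hlt
    have htop := topAt_mono_mono A τ ν
    intro μ' hμ'
    have hμ'' : μ' ∈ (A.star (Finsupp.single τ 1) (Finsupp.single ν 1)).support :=
      Finsupp.support_smul hμ'
    exact ordlt_of_le_lt ord (htop.2 μ' hμ'') hlt2

/-- `x^σ ⋆ (single ν c)` has top `σ + ν`. -/
lemma topAt_mono_single (σ ν : Fin n → ℕ) {c : K} (hc : c ≠ 0) :
    TopAt ord (σ + ν) (A.star (Finsupp.single σ 1) (Finsupp.single ν c)) := by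
  rw [single_eq_star A ν c, ← A.star_assoc]
  exact topAt_star_mono A (topAt_mono_scalar A σ hc) ν

/-- `x^σ ⋆ f` has top `σ + lexp f`. -/
lemma topAt_mono_star {σ : Fin n → ℕ} {f : SPoly K n} (hf : f ≠ 0) :
    TopAt ord (σ + lexp ord f) (A.star (Finsupp.single σ 1) f) := by
  classical
  have hrepr : A.star (Finsupp.single σ 1) f
      = ∑ ν ∈ f.support, A.star (Finsupp.single σ 1) (Finsupp.single ν (f ν)) := by
    conv_lhs => rw [eq_sum_single f]
    rw [star_sum_right]
  rw [hrepr]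
  apply topAt_sum ord (i₀ := lexp ord f) (lexp_mem ord hf)
  · exact topAt_mono_single A σ _ (Finsupp.mem_support_iff.mp (lexp_mem ord hf))
  · intro ν hν hne
    have hlt : ord.lt ν (lexp ord f) := ordlt_of_le_ne ord (le_lexp ord hν) hne
    have hlt2 : ord.lt (σ + ν) (σ + lexp ord f) := by
      have := A.add_compat ν (lexp ord f) σ hlt
      rwa [add_comm ν σ, add_comm (lexp ord f) σ] at this
    exact (topAt_mono_single A σ ν (Finsupp.mem_support_iff.mp hν)).sbnd ord hlt2

/-- `P ⋆ f` has top `lexp P + lexp f`. -/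
lemma topAt_star {P f : SPoly K n} (hP : P ≠ 0) (hf : f ≠ 0) :
    TopAt ord (lexp ord P + lexp ord f) (A.star P f) := by
  classical
  have hrepr : A.star P f
      = ∑ τ ∈ P.support, A.star (Finsupp.single τ (P τ)) f := by
    conv_lhs => rw [eq_sum_single P]
    rw [sum_star_left]
  rw [hrepr]
  apply topAt_sum ord (i₀ := lexp ord P) (lexp_mem ord hP)
  · rw [star_single_left]
    exact (topAt_mono_star A hf).smul ord (Finsupp.mem_support_iff.mp (lexp_mem ord hP))
  · intro τ hτ hne
    rw [star_single_left]
    have hlt : ord.lt τ (lexp ord P) := ordlt_of_le_ne ord (le_lexp ord hτ) hne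
    have hlt2 : ord.lt (τ + lexp ord f) (lexp ord P + lexp ord f) :=
      A.add_compat τ (lexp ord P) (lexp ord f) hlt
    intro μ' hμ'
    have hμ'' := Finsupp.support_smul hμ'
    exact ordlt_of_le_lt ord ((topAt_mono_star A hf).2 μ' hμ'') hlt2

end Lemmas3
section Lemmas4
variable {K : Type} [Field K] {n : ℕ} {ord : LinearOrder (Fin n → ℕ)} (A : SolvMul K n ord)
  (L : InvDiv n) (𝓕 : Finset (SPoly K n))

lemma span_zero : (0 : SPoly K n) ∈ PolyInvSpan ord A L 𝓕 := by
  refine ⟨fun _ => 0, fun h μ hμ => by simp at hμ, ?_⟩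
  simp [star_zero_left]

lemma span_add {g g' : SPoly K n} (hg : g ∈ PolyInvSpan ord A L 𝓕)
    (hg' : g' ∈ PolyInvSpan ord A L 𝓕) : g + g' ∈ PolyInvSpan ord A L 𝓕 := by
  classical
  obtain ⟨P, hP, hPe⟩ := hg
  obtain ⟨Q, hQ, hQe⟩ := hg'
  refine ⟨fun h => P h + Q h, ?_, ?_⟩
  · intro h μ hμ i hi
    rcases Finset.mem_union.mp (Finsupp.support_add hμ) with h1 | h1
    · exact hP h μ h1 i hi
    · exact hQ h μ h1 i hi
  · rw [hPe, hQe, ← Finset.sum_add_distrib]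
    exact Finset.sum_congr rfl fun h _ => (A.add_star (P h) (Q h) h.1).symm

lemma span_neg {g : SPoly K n} (hg : g ∈ PolyInvSpan ord A L 𝓕) :
    -g ∈ PolyInvSpan ord A L 𝓕 := by
  obtain ⟨P, hP, hPe⟩ := hg
  refine ⟨fun h => -(P h), ?_, ?_⟩
  · intro h μ hμ i hi
    exact hP h μ (by rwa [Finsupp.support_neg] at hμ) i hi
  · rw [hPe, ← Finset.sum_neg_distrib]
    exact Finset.sum_congr rfl fun h _ => (star_neg_left A (P h) h.1).symm

lemma span_sub {g g' : SPoly K n} (hg : g ∈ PolyInvSpan ord A L 𝓕)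
    (hg' : g' ∈ PolyInvSpan ord A L 𝓕) : g - g' ∈ PolyInvSpan ord A L 𝓕 := by
  rw [sub_eq_add_neg]
  exact span_add A L 𝓕 hg (span_neg A L 𝓕 hg')

lemma span_single_star {f : SPoly K n} (hf : f ∈ 𝓕) (σ : Fin n → ℕ) (c : K)
    (hσ : ∀ i ∉ L.mult (leadSet ord 𝓕) (lexp ord f), σ i = 0) :
    A.star (Finsupp.single σ c) f ∈ PolyInvSpan ord A L 𝓕 := by
  classical
  refine ⟨fun h => if h.1 = f then Finsupp.single σ c else 0, ?_, ?_⟩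
  · intro h μ hμ i hi
    dsimp only at hμ
    by_cases hh : h.1 = f
    · rw [if_pos hh] at hμ
      have := Finsupp.support_single_subset hμ
      rw [Finset.mem_singleton] at this
      subst this
      rw [hh] at hi
      exact hσ i hi
    · rw [if_neg hh] at hμ; simp at hμ
  · rw [Finset.sum_eq_single_of_mem ⟨f, hf⟩ (Finset.mem_attach _ _)]
    · dsimp only; rw [if_pos rfl]
    · intro h _ hne
      have hh : h.1 ≠ f := fun he => hne (Subtype.ext he)
      dsimp only; rw [if_neg hh, star_zero_left]

lemma rcone_self {N : Set (Fin n)} (ν : Fin n → ℕ) : ν ∈ rcone N ν :=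
  ⟨fun i => le_refl _, fun _ _ => rfl⟩

lemma redstep_sub_mem {g g' : SPoly K n} (h : RedStep ord A L 𝓕 g g') :
    g - g' ∈ PolyInvSpan ord A L 𝓕 := by
  obtain ⟨f, hf, μ, hμ, hcone, heq⟩ := h
  have : g - g' = A.star (Finsupp.single (μ - lexp ord f)
      (g μ / (A.star (Finsupp.single (μ - lexp ord f) 1) f) μ)) f := by
    rw [heq, sub_sub_cancel]
    conv_rhs => rw [star_single_left]
  rw [this]
  apply span_single_star A L 𝓕 hf
  intro i hi
  have h2 := hcone.2 i hi
  show μ i - lexp ord f i = 0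
  omega

lemma chain_sub_mem {g g' : SPoly K n}
    (h : Relation.ReflTransGen (RedStep ord A L 𝓕) g g') :
    g - g' ∈ PolyInvSpan ord A L 𝓕 := by
  induction h with
  | refl => simpa using span_zero A L 𝓕
  | tail _ hstep ih =>
      have := span_add A L 𝓕 ih (redstep_sub_mem A L 𝓕 hstep)
      simpa using this

end Lemmas4
section Lemmas5
variable {K : Type} [Field K] {n : ℕ} {ord : LinearOrder (Fin n → ℕ)} (A : SolvMul K n ord)
  (L : InvDiv n) (𝓕 : Finset (SPoly K n))

lemma cone_disj
    (hauto : ∀ f ∈ 𝓕, ∀ f' ∈ 𝓕, f ≠ f' →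
      lexp ord f ∉ rcone (L.mult (leadSet ord 𝓕) (lexp ord f')) (lexp ord f'))
    {f f' : SPoly K n} (hf : f ∈ 𝓕) (hf' : f' ∈ 𝓕) (hne : f ≠ f') {μ : Fin n → ℕ}
    (h1 : μ ∈ rcone (L.mult (leadSet ord 𝓕) (lexp ord f)) (lexp ord f))
    (h2 : μ ∈ rcone (L.mult (leadSet ord 𝓕) (lexp ord f')) (lexp ord f')) : False := by
  by_cases hle : lexp ord f = lexp ord f'
  · exact hauto f hf f' hf' hne (hle ▸ rcone_self _)
  · have hm : lexp ord f ∈ leadSet ord 𝓕 := Finset.mem_image_of_mem _ hf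
    have hm' : lexp ord f' ∈ leadSet ord 𝓕 := Finset.mem_image_of_mem _ hf'
    rcases L.nested (leadSet ord 𝓕) _ hm _ hm' ⟨μ, h1, h2⟩ with hsub | hsub
    · exact hauto f hf f' hf' hne (hsub (rcone_self _))
    · exact hauto f' hf' f hf hne.symm (hsub (rcone_self _))

lemma span_reducible
    (h0 : (0 : SPoly K n) ∉ 𝓕)
    (hauto : ∀ f ∈ 𝓕, ∀ f' ∈ 𝓕, f ≠ f' →
      lexp ord f ∉ rcone (L.mult (leadSet ord 𝓕) (lexp ord f')) (lexp ord f'))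
    {g : SPoly K n} (hg : g ∈ PolyInvSpan ord A L 𝓕) (hne : g ≠ 0) :
    ∃ μ ∈ g.support, ∃ f ∈ 𝓕,
      μ ∈ rcone (L.mult (leadSet ord 𝓕) (lexp ord f)) (lexp ord f) := by
  classical
  obtain ⟨P, hPsupp, hgeq⟩ := hg
  set T := 𝓕.attach.filter (fun h => P h ≠ 0) with hT
  have hTne : T.Nonempty := by
    by_contra hTe
    apply hne
    rw [hgeq]
    apply Finset.sum_eq_zero
    intro h hh
    have : P h = 0 := by
      by_contra hP
      exact hTe ⟨h, Finset.mem_filter.mpr ⟨hh, hP⟩⟩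
    rw [this, star_zero_left]
  set m : {h // h ∈ 𝓕} → (Fin n → ℕ) := fun h => lexp ord (P h) + lexp ord h.1 with hm
  -- each m h is in the involutive cone of h
  have hcone : ∀ h ∈ T, m h ∈ rcone (L.mult (leadSet ord 𝓕) (lexp ord h.1)) (lexp ord h.1) := by
    intro h hh
    have hP : P h ≠ 0 := (Finset.mem_filter.mp hh).2
    constructor
    · intro i; exact Nat.le_add_left _ _
    · intro i hi
      have : lexp ord (P h) i = 0 := hPsupp h _ (lexp_mem ord hP) i hi
      show lexp ord (P h) i + lexp ord h.1 i = lexp ord h.1 i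
      rw [this, zero_add]
  obtain ⟨h₀, hh₀, hmax⟩ := @Finset.exists_max_image _ _ ord T m hTne
  have hP₀ : P h₀ ≠ 0 := (Finset.mem_filter.mp hh₀).2
  have hf₀ : h₀.1 ≠ 0 := fun he => h0 (he ▸ h₀.2)
  have hstrict : ∀ h ∈ T, h ≠ h₀ → ord.lt (m h) (m h₀) := by
    intro h hh hhn
    apply ordlt_of_le_ne ord (hmax h hh)
    intro heq
    exact cone_disj L 𝓕 hauto h.2 h₀.2 (fun he => hhn (Subtype.ext he))
      (hcone h hh) (heq ▸ hcone h₀ hh₀)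
  have htop : TopAt ord (m h₀) g := by
    rw [hgeq]
    apply topAt_sum ord (i₀ := h₀) (Finset.mem_attach _ _)
    · exact topAt_star A hP₀ hf₀
    · intro h _ hhn
      by_cases hP : P h = 0
      · rw [hP, star_zero_left]; exact sbnd_zero ord
      · have hhT : h ∈ T := Finset.mem_filter.mpr ⟨Finset.mem_attach _ _, hP⟩
        exact (topAt_star A hP (fun he => h0 (he ▸ h.2))).sbnd ord (hstrict h hhT hhn)
  exact ⟨m h₀, Finsupp.mem_support_iff.mpr htop.1, h₀.1, h₀.2, hcone h₀ hh₀⟩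

end Lemmas5
/-- If `𝓕` is a finite, involutively head autoreduced set of nonzero polynomials,
every polynomial `g` has a unique involutive normal form modulo `𝓕`; moreover `g`
lies in the involutive span of `𝓕` iff its involutive normal form is `0`. -/
theorem stmt17 {K : Type} [Field K] {n : ℕ} (ord : LinearOrder (Fin n → ℕ))
    (A : SolvMul K n ord) (L : InvDiv n) (𝓕 : Finset (SPoly K n))
    (h0 : (0 : SPoly K n) ∉ 𝓕)
    (hauto : ∀ f ∈ 𝓕, ∀ f' ∈ 𝓕, f ≠ f' →
      lexp ord f ∉ rcone (L.mult (leadSet ord 𝓕) (lexp ord f')) (lexp ord f')) :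
    (∀ g g₁ g₂ : SPoly K n, IsInvNF ord A L 𝓕 g g₁ → IsInvNF ord A L 𝓕 g g₂ →
      g₁ = g₂) ∧
    (∀ g g₁ : SPoly K n, IsInvNF ord A L 𝓕 g g₁ →
      (g ∈ PolyInvSpan ord A L 𝓕 ↔ g₁ = 0)) := by

  classical
  have key : ∀ g₁ g₂ : SPoly K n, (g₁ - g₂) ∈ PolyInvSpan ord A L 𝓕 →
      (∀ μ ∈ g₁.support, ∀ f ∈ 𝓕,
        μ ∉ rcone (L.mult (leadSet ord 𝓕) (lexp ord f)) (lexp ord f)) →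
      (∀ μ ∈ g₂.support, ∀ f ∈ 𝓕,
        μ ∉ rcone (L.mult (leadSet ord 𝓕) (lexp ord f)) (lexp ord f)) → g₁ = g₂ := by
    intro g₁ g₂ hspan h1 h2
    by_contra hne
    have hd : g₁ - g₂ ≠ 0 := sub_ne_zero.mpr hne
    obtain ⟨μ, hμ, f, hf, hc⟩ := span_reducible A L 𝓕 h0 hauto hspan hd
    rcases Finset.mem_union.mp (Finsupp.support_sub hμ) with h | h
    · exact h1 μ h f hf hc
    · exact h2 μ h f hf hc
  constructor
  · intro g g₁ g₂ h1 h2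
    apply key g₁ g₂ ?_ h1.2 h2.2
    have d1 := chain_sub_mem A L 𝓕 h1.1
    have d2 := chain_sub_mem A L 𝓕 h2.1
    have h3 : g₁ - g₂ = (g - g₂) - (g - g₁) := by abel
    rw [h3]
    exact span_sub A L 𝓕 d2 d1
  · intro g g₁ h1
    have d1 := chain_sub_mem A L 𝓕 h1.1
    constructor
    · intro hg
      apply key g₁ 0 ?_ h1.2 (by simp)
      have h3 : g₁ - 0 = g - (g - g₁) := by abel
      rw [h3]
      exact span_sub A L 𝓕 hg d1
    · intro hz
      rw [hz, sub_zero] at d1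
      exact d1
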